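/- The nonachievable region R̄ = {λ · s(x, N̄) : λ > 1, x ∈ B}, i.e. the set of positive scalar multiples (with factor strictly greater than 1) of boundary throughput vectors, is a convex subset of ℝ^n. -/

import Mathlib

open Finset Set Filter Topology

noncomputable def Xfun (n : ℕ) (a : ℝ) (x N : Fin n → ℝ) : ℝ :=
  a + (∑ k, (N k - 1) * x k) + (∏ k, (1 + x k)) - 1

noncomputable def sVec (n : ℕ) (a : ℝ) (L x N : Fin n → ℝ) : Fin n → ℝ :=
  fun i => N i * L i * x i / Xfun n a x N

noncomputable def hfun (n : ℕ) (a : ℝ) (x : Fin n → ℝ) : ℝ :=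
  (∑ i, x i / (1 + x i)) + (1 - a) / ∏ j, (1 + x j)

def rateRegion (n : ℕ) (a : ℝ) (L Nlo Nhi : Fin n → ℝ) : Set (Fin n → ℝ) :=
  {u | ∃ x N : Fin n → ℝ, (∀ i, 0 ≤ x i) ∧ (∀ i, Nlo i ≤ N i ∧ N i ≤ Nhi i) ∧
    u = sVec n a L x N}

noncomputable def alpha (n : ℕ) (L Nhi xs : Fin n → ℝ) (i : Fin n) : ℝ :=
  (Nhi i - 1 + ∏ j ∈ Finset.univ.erase i, (1 + xs j)) / (L i * Nhi i)

def Cset (n : ℕ) (L Nhi xs : Fin n → ℝ) : Set (Fin n → ℝ) :=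
  {sv | (∀ i, 0 ≤ sv i) ∧ ∑ i, alpha n L Nhi xs i * sv i ≤ 1}

-- Core algebraic lemma: strict Cauchy-Schwarz step
lemma core_cs {n : ℕ} (c g : Fin n → ℝ) (S : ℝ) (hS : S = ∑ j, g j)
    (hg0 : ∀ j, 0 ≤ g j) (hSpos : 0 < S)
    (hbal : S * ∑ j, c j = ∑ j, c j * g j)
    (jw : Fin n) (hcjw : c jw ≠ 0) (hgjw : g jw < S) :
    (∑ j, c j) ^ 2 < ∑ j, (c j) ^ 2 := by
  have hgS : ∀ j, g j ≤ S := by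
    intro j
    rw [hS]
    exact Finset.single_le_sum (fun k _ => hg0 k) (mem_univ j)
  -- Cauchy-Schwarz : (∑ c g)^2 ≤ (∑ c^2 g) * S
  have hCS : (∑ j, c j * g j) ^ 2 ≤ (∑ j, (c j) ^ 2 * g j) * S := by
    have h := Finset.sum_mul_sq_le_sq_mul_sq Finset.univ
      (fun j => c j * Real.sqrt (g j)) (fun j => Real.sqrt (g j))
    have e1 : ∀ j : Fin n, c j * Real.sqrt (g j) * Real.sqrt (g j) = c j * g j := by
      intro j; rw [mul_assoc, Real.mul_self_sqrt (hg0 j)]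
    have e2 : ∀ j : Fin n, (c j * Real.sqrt (g j)) ^ 2 = (c j) ^ 2 * g j := by
      intro j; rw [mul_pow, Real.sq_sqrt (hg0 j)]
    have e3 : ∀ j : Fin n, (Real.sqrt (g j)) ^ 2 = g j := fun j => Real.sq_sqrt (hg0 j)
    calc (∑ j, c j * g j) ^ 2
        = (∑ j, c j * Real.sqrt (g j) * Real.sqrt (g j)) ^ 2 := by
          rw [Finset.sum_congr rfl (fun j _ => (e1 j).symm)]
      _ ≤ (∑ j, (c j * Real.sqrt (g j)) ^ 2) * ∑ j, (Real.sqrt (g j)) ^ 2 := h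
      _ = (∑ j, (c j) ^ 2 * g j) * S := by
          rw [Finset.sum_congr rfl (fun j _ => e2 j), Finset.sum_congr rfl (fun j _ => e3 j), hS]
  -- strict termwise bound
  have hstrict : ∑ j, (c j) ^ 2 * g j < S * ∑ j, (c j) ^ 2 := by
    have hle : ∀ j ∈ Finset.univ, (c j) ^ 2 * g j ≤ (c j) ^ 2 * S := fun j _ =>
      mul_le_mul_of_nonneg_left (hgS j) (sq_nonneg _)
    have hlt : (c jw) ^ 2 * g jw < (c jw) ^ 2 * S :=
      mul_lt_mul_of_pos_left hgjw (by positivity)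
    calc ∑ j, (c j) ^ 2 * g j < ∑ j, (c j) ^ 2 * S :=
          Finset.sum_lt_sum hle ⟨jw, mem_univ jw, hlt⟩
      _ = S * ∑ j, (c j) ^ 2 := by rw [← Finset.sum_mul]; ring
  -- combine
  have key : S ^ 2 * (∑ j, c j) ^ 2 < S ^ 2 * ∑ j, (c j) ^ 2 := by
    have h1 : (S * ∑ j, c j) ^ 2 ≤ (∑ j, (c j) ^ 2 * g j) * S := by rw [hbal]; exact hCS
    have h2 : (∑ j, (c j) ^ 2 * g j) * S < (S * ∑ j, (c j) ^ 2) * S :=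
      mul_lt_mul_of_pos_right hstrict hSpos
    nlinarith [h1, h2]
  exact lt_of_mul_lt_mul_left key (by positivity)

lemma one_dim (ψ ψ1 ψ2 : ℝ → ℝ)
    (hψ0 : ψ 0 = 0) (hψ1 : ψ 1 = 0)
    (hd1 : ∀ t ∈ Set.Icc (0:ℝ) 1, HasDerivAt ψ (ψ1 t) t)
    (hd2 : ∀ t ∈ Set.Icc (0:ℝ) 1, HasDerivAt ψ1 (ψ2 t) t)
    (hcore : ∀ t ∈ Set.Ioo (0:ℝ) 1, ψ1 t = 0 → 0 < ψ2 t) :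
    ∀ t ∈ Set.Icc (0:ℝ) 1, ψ t ≤ 0 := by
  by_contra hcon
  push_neg at hcon
  obtain ⟨s, hsmem, hspos⟩ := hcon
  have hψcont : ContinuousOn ψ (Set.Icc 0 1) := fun t ht =>
    (hd1 t ht).continuousAt.continuousWithinAt
  obtain ⟨T, hTmem, hTmax⟩ :=
    isCompact_Icc.exists_isMaxOn (⟨0, by norm_num⟩ : (Set.Icc (0:ℝ) 1).Nonempty) hψcont
  have hTpos : 0 < ψ T := lt_of_lt_of_le hspos (hTmax hsmem)
  have hT0 : T ≠ 0 := by intro h; rw [h, hψ0] at hTpos; exact lt_irrefl _ hTpos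
  have hT1 : T ≠ 1 := by intro h; rw [h, hψ1] at hTpos; exact lt_irrefl _ hTpos
  have hTin : T ∈ Set.Ioo (0:ℝ) 1 :=
    ⟨lt_of_le_of_ne hTmem.1 (Ne.symm hT0), lt_of_le_of_ne hTmem.2 hT1⟩
  have hloc : IsLocalMax ψ T := hTmax.isLocalMax (Icc_mem_nhds hTin.1 hTin.2)
  have hcrit : ψ1 T = 0 := hloc.hasDerivAt_eq_zero (hd1 T hTmem)
  have h2pos : 0 < ψ2 T := hcore T hTin hcrit
  -- ψ1 > 0 just to the right of T
  have hslope : Tendsto (slope ψ1 T) (𝓝[>] T) (𝓝 (ψ2 T)) :=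
    (hasDerivAt_iff_tendsto_slope.1 (hd2 T hTmem)).mono_left
      (nhdsWithin_mono _ (fun s hs => ne_of_gt hs))
  have hev : ∀ᶠ s in 𝓝[>] T, 0 < slope ψ1 T s := hslope.eventually (eventually_gt_nhds h2pos)
  have hev2 : ∀ᶠ s in 𝓝[>] T, 0 < ψ1 s := by
    filter_upwards [hev, self_mem_nhdsWithin] with s h1 h2
    have hsT : (0:ℝ) < s - T := sub_pos.2 h2
    rw [slope_def_field, hcrit, sub_zero] at h1
    have := mul_pos h1 hsT
    rwa [div_mul_cancel₀ _ (ne_of_gt hsT)] at this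
  have hev3 : ∀ᶠ s in 𝓝[>] T, s < 1 :=
    eventually_nhdsWithin_of_eventually_nhds (eventually_lt_nhds hTin.2)
  obtain ⟨b, hb, hsub⟩ := mem_nhdsGT_iff_exists_Ioo_subset.1 (hev2.and hev3)
  have hTb' : T < min b 1 := lt_min hb hTin.2
  set s0 := (T + min b 1) / 2 with hs0def
  have hs0a : T < s0 := by simp only [hs0def]; linarith
  have hs0b : s0 < min b 1 := by simp only [hs0def]; linarith
  have hs0le1 : s0 ≤ 1 := le_of_lt (lt_of_lt_of_le hs0b (min_le_right b 1))
  have hmono : StrictMonoOn ψ (Icc T s0) := by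
    apply strictMonoOn_of_deriv_pos (convex_Icc T s0)
    · exact hψcont.mono (Icc_subset_Icc hTmem.1 hs0le1)
    · intro x hx
      rw [interior_Icc] at hx
      have hxb : x < min b 1 := lt_trans hx.2 hs0b
      have hxIoo : x ∈ Ioo T b := ⟨hx.1, lt_of_lt_of_le hxb (min_le_left b 1)⟩
      have hx01 : x ∈ Set.Icc (0:ℝ) 1 :=
        ⟨le_trans hTmem.1 (le_of_lt hx.1), le_of_lt (lt_of_lt_of_le hxb (min_le_right b 1))⟩
      rw [(hd1 x hx01).deriv]
      exact (hsub hxIoo).1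
  have hlt : ψ T < ψ s0 :=
    hmono (left_mem_Icc.2 (le_of_lt hs0a)) (right_mem_Icc.2 (le_of_lt hs0a)) hs0a
  have hs0mem : s0 ∈ Set.Icc (0:ℝ) 1 := ⟨le_trans hTmem.1 (le_of_lt hs0a), hs0le1⟩
  exact absurd (hTmax hs0mem) (not_le.2 hlt)

lemma ki_u (n : ℕ) (K : ℝ) (hK0 : 0 < K) (hK1 : K < 1) (u v : Fin n → ℝ)
    (hu0 : ∀ j, 0 < u j) (hu1 : ∀ j, u j ≤ 1) (hv0 : ∀ j, 0 < v j) (hv1 : ∀ j, v j ≤ 1)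
    (hfu : ∑ j, u j = (n : ℝ) - 1 + K * ∏ j, u j)
    (hfv : ∑ j, v j = (n : ℝ) - 1 + K * ∏ j, v j) :
    (n : ℝ) - 1 + (∏ j, u j) / (∏ j, v j) ≤ ∑ j, u j / v j := by
  by_cases huv : u = v
  · subst huv
    have h1 : ∀ j, u j / u j = (1:ℝ) := fun j => div_self (ne_of_gt (hu0 j))
    have h2 : (∏ j, u j) / (∏ j, u j) = 1 :=
      div_self (ne_of_gt (Finset.prod_pos (fun j _ => hu0 j)))
    rw [h2, Finset.sum_congr rfl (fun j _ => h1 j)]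
    simp
  have hU : (0:ℝ) < ∏ j, u j := Finset.prod_pos (fun j _ => hu0 j)
  have hV : (0:ℝ) < ∏ j, v j := Finset.prod_pos (fun j _ => hv0 j)
  set U := ∏ j, u j with hUdef
  set V := ∏ j, v j with hVdef
  set d : Fin n → ℝ := fun j => u j - v j with hddef
  have hdsum : ∑ j, d j = K * U - K * V := by
    have : ∑ j, d j = (∑ j, u j) - ∑ j, v j := by
      simp [hddef, Finset.sum_sub_distrib]
    rw [this, hfu, hfv]; ring
  -- two distinct nonzero coordinates of d
  have hd2 : ∃ j k, j ≠ k ∧ d j ≠ 0 ∧ d k ≠ 0 := by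
    have hne : ∃ j, d j ≠ 0 := by
      by_contra h
      push_neg at h
      exact huv (funext fun j => by have := h j; simp [hddef, sub_eq_zero] at this; exact this)
    obtain ⟨j0, hj0⟩ := hne
    by_contra h2
    push_neg at h2
    have hk : ∀ k, k ≠ j0 → d k = 0 := fun k hk => h2 j0 k (Ne.symm hk) hj0
    have huvk : ∀ k ∈ Finset.univ.erase j0, u k = v k := by
      intro k hkmem
      have := hk k (Finset.mem_erase.1 hkmem).1
      simp [hddef, sub_eq_zero] at this; exact this
    have hprod : U - V = d j0 * ∏ k ∈ Finset.univ.erase j0, u k := by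
      rw [hUdef, hVdef, ← Finset.mul_prod_erase Finset.univ u (Finset.mem_univ j0),
        ← Finset.mul_prod_erase Finset.univ v (Finset.mem_univ j0),
        Finset.prod_congr rfl huvk]
      simp [hddef]; ring
    have hsum : ∑ j, d j = d j0 :=
      Finset.sum_eq_single_of_mem j0 (Finset.mem_univ j0) (fun k _ hkk => hk k hkk)
    have hPp : (0:ℝ) < ∏ k ∈ Finset.univ.erase j0, u k :=
      Finset.prod_pos (fun k _ => hu0 k)
    have hPle : ∏ k ∈ Finset.univ.erase j0, u k ≤ 1 :=
      Finset.prod_le_one (fun k _ => le_of_lt (hu0 k)) (fun k _ => hu1 k)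
    have hdj0 : d j0 = K * U - K * V := by rw [← hsum]; exact hdsum
    have heq : d j0 = K * (d j0 * ∏ k ∈ Finset.univ.erase j0, u k) := by
      rw [← hprod, hdj0]; ring
    have : d j0 * (1 - K * ∏ k ∈ Finset.univ.erase j0, u k) = 0 := by
      rw [mul_sub]; rw [mul_one]; nlinarith [heq]
    have hKP : K * ∏ k ∈ Finset.univ.erase j0, u k < 1 :=
      lt_of_le_of_lt (by nlinarith) hK1
    rcases mul_eq_zero.1 this with h | h
    · exact hj0 h
    · linarith
  -- the path and its data
  set m : ℝ → Fin n → ℝ := fun t j => v j + t * d j with hmdef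
  set σ : ℝ → ℝ := fun t => K * V + t * (K * U - K * V) with hσdef
  have hm0 : ∀ t ∈ Set.Icc (0:ℝ) 1, ∀ j, 0 < m t j := by
    intro t ht j
    have h1 := hv0 j; have h2 := hu0 j
    have : m t j = (1 - t) * v j + t * u j := by simp [hmdef, hddef]; ring
    rw [this]
    rcases eq_or_lt_of_le ht.1 with h | h
    · rw [← h]; simpa using h1
    · have := mul_pos h h2
      nlinarith [mul_nonneg (sub_nonneg.2 ht.2) (le_of_lt h1)]
  have hm1 : ∀ t ∈ Set.Icc (0:ℝ) 1, ∀ j, m t j ≤ 1 := by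
    intro t ht j
    have : m t j = (1 - t) * v j + t * u j := by simp [hmdef, hddef]; ring
    rw [this]
    nlinarith [mul_nonneg (sub_nonneg.2 ht.2) (sub_nonneg.2 (hv1 j)),
      mul_nonneg ht.1 (sub_nonneg.2 (hu1 j))]
  have hσpos : ∀ t ∈ Set.Icc (0:ℝ) 1, 0 < σ t := by
    intro t ht
    have : σ t = K * ((1 - t) * V + t * U) := by simp [hσdef]; ring
    rw [this]
    rcases eq_or_lt_of_le ht.1 with h | h
    · rw [← h]; simpa using mul_pos hK0 hV
    · have := mul_pos h hU
      have := mul_nonneg (sub_nonneg.2 ht.2) (le_of_lt hV)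
      exact mul_pos hK0 (by nlinarith)
  have hσsum : ∀ t : ℝ, σ t = (∑ j, m t j) - ((n : ℝ) - 1) := by
    intro t
    have : ∑ j, m t j = (∑ j, v j) + t * ∑ j, d j := by
      simp [hmdef, Finset.sum_add_distrib, Finset.mul_sum]
    rw [this, hfv, hdsum, hσdef]; ring
  -- ψ and its derivatives
  set ψ : ℝ → ℝ := fun t => Real.log (σ t) - (Real.log K + ∑ j, Real.log (m t j)) with hψdef
  set ψ1 : ℝ → ℝ := fun t => (K * U - K * V) / σ t - ∑ j, d j / m t j with hψ1def
  set ψ2 : ℝ → ℝ := fun t => ∑ j, (d j / m t j) ^ 2 - ((K * U - K * V) / σ t) ^ 2 with hψ2def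
  have hψ0 : ψ 0 = 0 := by
    have h1 : σ 0 = K * V := by simp [hσdef]
    have h2 : ∀ j, m (0:ℝ) j = v j := fun j => by simp [hmdef]
    have h3 : ∑ j, Real.log (m 0 j) = ∑ j, Real.log (v j) :=
      Finset.sum_congr rfl (fun j _ => by rw [h2 j])
    simp only [hψdef]
    rw [h1, h3, Real.log_mul (ne_of_gt hK0) (ne_of_gt hV), hVdef,
      Real.log_prod (fun j _ => ne_of_gt (hv0 j))]
    ring
  have hψone : ψ 1 = 0 := by
    have h1 : σ 1 = K * U := by simp [hσdef]
    have h2 : ∀ j, m (1:ℝ) j = u j := fun j => by simp [hmdef, hddef]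
    have h3 : ∑ j, Real.log (m 1 j) = ∑ j, Real.log (u j) :=
      Finset.sum_congr rfl (fun j _ => by rw [h2 j])
    simp only [hψdef]
    rw [h1, h3, Real.log_mul (ne_of_gt hK0) (ne_of_gt hU), hUdef,
      Real.log_prod (fun j _ => ne_of_gt (hu0 j))]
    ring
  have hσderiv : ∀ t : ℝ, HasDerivAt σ (K * U - K * V) t := by
    intro t
    have := (hasDerivAt_id t).const_mul (K * U - K * V)
    have h2 := ((hasDerivAt_id t).mul_const (K * U - K * V)).const_add (K * V)
    simpa [hσdef] using h2
  have hmderiv : ∀ t : ℝ, ∀ j, HasDerivAt (fun s => m s j) (d j) t := by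
    intro t j
    have := ((hasDerivAt_id t).mul_const (d j)).const_add (v j)
    simpa [hmdef] using this
  have hd1 : ∀ t ∈ Set.Icc (0:ℝ) 1, HasDerivAt ψ (ψ1 t) t := by
    intro t ht
    have hlogσ : HasDerivAt (fun s => Real.log (σ s)) ((K * U - K * V) / σ t) t :=
      (hσderiv t).log (ne_of_gt (hσpos t ht))
    have hlogm : ∀ j, HasDerivAt (fun s => Real.log (m s j)) (d j / m t j) t := fun j =>
      (hmderiv t j).log (ne_of_gt (hm0 t ht j))
    have hsum : HasDerivAt (fun s => ∑ j, Real.log (m s j)) (∑ j, d j / m t j) t :=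
      HasDerivAt.fun_sum (fun j _ => hlogm j)
    simpa [hψdef, hψ1def] using hlogσ.fun_sub ((hasDerivAt_const t (Real.log K)).fun_add hsum)
  have hd2deriv : ∀ t ∈ Set.Icc (0:ℝ) 1, HasDerivAt ψ1 (ψ2 t) t := by
    intro t ht
    have hterm1 : HasDerivAt (fun s => (K * U - K * V) / σ s)
        (-((K * U - K * V) / σ t) ^ 2) t := by
      have := (hasDerivAt_const t (K * U - K * V)).fun_div (hσderiv t) (ne_of_gt (hσpos t ht))
      refine this.congr_deriv ?_
      ring
    have htermj : ∀ j, HasDerivAt (fun s => d j / m s j) (-(d j / m t j) ^ 2) t := by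
      intro j
      have := (hasDerivAt_const t (d j)).fun_div (hmderiv t j) (ne_of_gt (hm0 t ht j))
      refine this.congr_deriv ?_
      ring
    have hsum : HasDerivAt (fun s => ∑ j, d j / m s j) (∑ j, -(d j / m t j) ^ 2) t :=
      HasDerivAt.fun_sum (fun j _ => htermj j)
    have := hterm1.fun_sub hsum
    refine this.congr_deriv ?_
    simp only [hψ2def, Finset.sum_neg_distrib]
    ring
  -- core : at interior critical points the second derivative is positive
  have hcore : ∀ t ∈ Set.Ioo (0:ℝ) 1, ψ1 t = 0 → 0 < ψ2 t := by
    intro t ht hψ1t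
    have htIcc : t ∈ Set.Icc (0:ℝ) 1 := ⟨le_of_lt ht.1, le_of_lt ht.2⟩
    have hσne : σ t ≠ 0 := ne_of_gt (hσpos t htIcc)
    set c : Fin n → ℝ := fun j => d j / m t j with hcdef
    set g : Fin n → ℝ := fun j => 1 - m t j with hgdef
    set S : ℝ := ∑ j, g j with hSdef
    have hg0 : ∀ j, 0 ≤ g j := fun j => sub_nonneg.2 (hm1 t htIcc j)
    have hσS : σ t = 1 - S := by
      rw [hσsum t, hSdef]
      have hgm : ∑ j, g j = (n:ℝ) - ∑ j, m t j := by
        simp [hgdef, Finset.sum_sub_distrib, Finset.card_univ]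
      rw [hgm]; ring
    have hKUV : K * U - K * V = σ t * ∑ j, c j := by
      have hfrac : (K * U - K * V) / σ t = ∑ j, c j := by
        have h0 := hψ1t
        simp only [hψ1def] at h0
        have : (K * U - K * V) / σ t - ∑ j, c j = 0 := h0
        linarith
      have h := (div_eq_iff hσne).1 hfrac
      rw [h]; ring
    have hcm : ∀ j, c j * m t j = d j := fun j =>
      div_mul_cancel₀ (d j) (ne_of_gt (hm0 t htIcc j))
    have hbal : S * ∑ j, c j = ∑ j, c j * g j := by
      have h1 : ∑ j, c j * m t j = σ t * ∑ j, c j := by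
        rw [Finset.sum_congr rfl (fun j _ => hcm j), hdsum]
        exact hKUV
      have h2 : ∑ j, c j * (S - g j) = 0 := by
        have he : ∀ j : Fin n, c j * (S - g j) = c j * m t j - c j * σ t := by
          intro j; rw [hσS]; simp only [hgdef]; ring
        rw [Finset.sum_congr rfl (fun j _ => he j), Finset.sum_sub_distrib, h1,
          ← Finset.sum_mul]
        ring
      have h3 : ∑ j, c j * (S - g j) = S * (∑ j, c j) - ∑ j, c j * g j := by
        have he : ∀ j : Fin n, c j * (S - g j) = S * c j - c j * g j := fun j => by ring
        rw [Finset.sum_congr rfl (fun j _ => he j), Finset.sum_sub_distrib, ← Finset.mul_sum]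
      linarith
    obtain ⟨j0, k0, hjk, hdj0, hdk0⟩ := hd2
    have hSnonneg : 0 ≤ S := by
      rw [hSdef]; exact Finset.sum_nonneg fun j _ => hg0 j
    have hSpos : 0 < S := by
      rcases eq_or_lt_of_le hSnonneg with h | h
      · exfalso
        have hall : ∀ j, g j = 0 := fun j =>
          (Finset.sum_eq_zero_iff_of_nonneg (fun k _ => hg0 k)).1 h.symm j (Finset.mem_univ j)
        have hmj0 : m t j0 = 1 := by
          have := hall j0; simp only [hgdef] at this; linarith
        have hveq : m t j0 = (1 - t) * v j0 + t * u j0 := by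
          simp only [hmdef, hddef]; ring
        have hzero : (1 - t) * (1 - v j0) + t * (1 - u j0) = 0 := by
          have : (1 - t) * (1 - v j0) + t * (1 - u j0) = 1 - m t j0 := by rw [hveq]; ring
          rw [this, hmj0]; ring
        have e1 : 0 ≤ (1 - t) * (1 - v j0) :=
          mul_nonneg (by linarith [ht.2]) (by linarith [hv1 j0])
        have e2 : 0 ≤ t * (1 - u j0) := mul_nonneg (le_of_lt ht.1) (by linarith [hu1 j0])
        have hveq0 : (1 - t) * (1 - v j0) = 0 := by linarith
        have hueq0 : t * (1 - u j0) = 0 := by linarith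
        have hv1'' : v j0 = 1 := by
          rcases mul_eq_zero.1 hveq0 with h' | h'
          · exfalso; have := ht.2; linarith
          · linarith
        have hu1'' : u j0 = 1 := by
          rcases mul_eq_zero.1 hueq0 with h' | h'
          · exfalso; have := ht.1; linarith
          · linarith
        apply hdj0
        simp only [hddef, hv1'', hu1'']; ring
      · exact h
    have hwit : ∃ j, d j ≠ 0 ∧ g j < S := by
      by_contra hw
      push_neg at hw
      have h1 := hw j0 hdj0
      have h2 := hw k0 hdk0
      have hpair : g j0 + g k0 ≤ S := by
        have hsub : ({j0, k0} : Finset (Fin n)) ⊆ Finset.univ := Finset.subset_univ _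
        have hmono := Finset.sum_le_sum_of_subset_of_nonneg hsub (fun k _ _ => hg0 k)
        rw [Finset.sum_pair hjk] at hmono
        exact hmono
      linarith
    obtain ⟨jw, hdjw, hgjw⟩ := hwit
    have hcjw : c jw ≠ 0 := div_ne_zero hdjw (ne_of_gt (hm0 t htIcc jw))
    have hkey := core_cs c g S hSdef hg0 hSpos hbal jw hcjw hgjw
    have hfrac : (K * U - K * V) / σ t = ∑ j, c j := by
      rw [hKUV, mul_comm, mul_div_assoc, div_self hσne, mul_one]
    simp only [hψ2def]
    rw [hfrac]
    have hcsq : ∑ j, (d j / m t j) ^ 2 = ∑ j, (c j) ^ 2 :=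
      Finset.sum_congr rfl (fun j _ => rfl)
    rw [hcsq]
    linarith
  -- conclude ψ ≤ 0 and the tangent inequality at 0
  have hψle := one_dim ψ ψ1 ψ2 hψ0 hψone hd1 hd2deriv hcore
  have hslope : Filter.Tendsto (slope ψ 0) (nhdsWithin 0 (Set.Ioi 0)) (nhds (ψ1 0)) :=
    (hasDerivAt_iff_tendsto_slope.1 (hd1 0 ⟨le_refl 0, zero_le_one⟩)).mono_left
      (nhdsWithin_mono _ (fun s hs => ne_of_gt hs))
  have hev : ∀ᶠ s in nhdsWithin (0:ℝ) (Set.Ioi 0), slope ψ 0 s ≤ 0 := by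
    have hmem : Set.Ioo (0:ℝ) 1 ∈ nhdsWithin (0:ℝ) (Set.Ioi 0) :=
      Ioo_mem_nhdsGT_of_mem (by constructor <;> norm_num)
    filter_upwards [hmem] with s hs
    rw [slope_def_field, hψ0, sub_zero, sub_zero]
    exact div_nonpos_of_nonpos_of_nonneg (hψle s ⟨le_of_lt hs.1, le_of_lt hs.2⟩) (le_of_lt hs.1)
  have hψ1nonpos : ψ1 0 ≤ 0 := le_of_tendsto hslope hev
  have hσ0 : σ 0 = K * V := by simp [hσdef]
  have hm0' : ∀ j, m (0:ℝ) j = v j := fun j => by simp [hmdef]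
  have h1 : (K * U - K * V) / (K * V) - ∑ j, d j / v j ≤ 0 := by
    have h0 := hψ1nonpos
    simp only [hψ1def] at h0
    have hs : ∑ j, d j / m 0 j = ∑ j, d j / v j :=
      Finset.sum_congr rfl fun j _ => by rw [hm0' j]
    rw [hσ0, hs] at h0
    exact h0
  have h2 : (K * U - K * V) / (K * V) = U / V - 1 := by
    field_simp
  have h3 : ∑ j, d j / v j = (∑ j, u j / v j) - (n:ℝ) := by
    have he : ∀ j : Fin n, d j / v j = u j / v j - 1 := fun j => by
      simp only [hddef]
      rw [sub_div, div_self (ne_of_gt (hv0 j))]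
    rw [Finset.sum_congr rfl (fun j _ => he j), Finset.sum_sub_distrib]
    simp [Finset.card_univ]
  rw [h2, h3] at h1
  linarith

lemma hfun_two_pos (n : ℕ) (a : ℝ) (ha0 : 0 < a) (x : Fin n → ℝ) (hx : ∀ i, 0 ≤ x i)
    (hhx : hfun n a x = 1) : ∃ i j, i ≠ j ∧ 0 < x i ∧ 0 < x j := by
  by_contra h
  push_neg at h
  by_cases hex : ∃ i, 0 < x i
  · obtain ⟨i0, hi0⟩ := hex
    have hz : ∀ j, j ≠ i0 → x j = 0 := by
      intro j hj
      have := h i0 j (Ne.symm hj) hi0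
      linarith [hx j]
    have hx0 : (0:ℝ) < 1 + x i0 := by linarith
    have hsum : ∑ i, x i / (1 + x i) = x i0 / (1 + x i0) := by
      apply Finset.sum_eq_single_of_mem i0 (Finset.mem_univ i0)
      intro j _ hj
      rw [hz j hj]
      norm_num
    have hprod : ∏ j, (1 + x j) = 1 + x i0 := by
      apply Finset.prod_eq_single_of_mem i0 (Finset.mem_univ i0)
      intro j _ hj
      rw [hz j hj]
      norm_num
    have : hfun n a x < 1 := by
      unfold hfun
      rw [hsum, hprod, ← add_div, div_lt_one hx0]
      linarith
    rw [hhx] at this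
    exact lt_irrefl _ this
  · push_neg at hex
    have hz : ∀ j, x j = 0 := fun j => le_antisymm (hex j) (hx j)
    have : hfun n a x = 1 - a := by
      unfold hfun
      have h1 : ∀ j : Fin n, x j / (1 + x j) = 0 := fun j => by rw [hz j]; norm_num
      have h2 : ∀ j : Fin n, (1:ℝ) + x j = 1 := fun j => by rw [hz j]; norm_num
      rw [Finset.sum_congr rfl (fun j _ => h1 j), Finset.prod_congr rfl (fun j _ => h2 j)]
      simp
    rw [hhx] at this
    linarith

lemma Xfun_eq (n : ℕ) (a : ℝ) (x N : Fin n → ℝ) (hx : ∀ i, 0 ≤ x i)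
    (hhx : hfun n a x = 1) :
    Xfun n a x N = ∑ i, x i * (N i - 1 + ∏ j ∈ Finset.univ.erase i, (1 + x j)) := by
  have h1x : ∀ i, (0:ℝ) < 1 + x i := fun i => by linarith [hx i]
  have hPmpos : ∀ i, (0:ℝ) < ∏ j ∈ Finset.univ.erase i, (1 + x j) := fun i =>
    Finset.prod_pos fun j _ => h1x j
  have hP : (0:ℝ) < ∏ j, (1 + x j) := Finset.prod_pos fun j _ => h1x j
  have hterm : ∀ i : Fin n, x i / (1 + x i) =
      x i * (∏ j ∈ Finset.univ.erase i, (1 + x j)) / ∏ j, (1 + x j) := by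
    intro i
    rw [← Finset.mul_prod_erase Finset.univ (fun j => 1 + x j) (Finset.mem_univ i)]
    rw [mul_comm (1 + x i) _, ← mul_div_mul_right (x i) (1 + x i) (ne_of_gt (hPmpos i))]
    ring_nf
  have hsum : hfun n a x =
      ((∑ i, x i * ∏ j ∈ Finset.univ.erase i, (1 + x j)) + (1 - a)) / ∏ j, (1 + x j) := by
    unfold hfun
    rw [Finset.sum_congr rfl (fun i _ => hterm i), ← Finset.sum_div, add_div]
  have hPeq : (∑ i, x i * ∏ j ∈ Finset.univ.erase i, (1 + x j)) + (1 - a) =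
      ∏ j, (1 + x j) := by
    have h0 := hhx
    rw [hsum, div_eq_one_iff_eq (ne_of_gt hP)] at h0
    exact h0
  unfold Xfun
  have hsplit : ∑ i, x i * (N i - 1 + ∏ j ∈ Finset.univ.erase i, (1 + x j)) =
      (∑ i, (N i - 1) * x i) + ∑ i, x i * ∏ j ∈ Finset.univ.erase i, (1 + x j) := by
    rw [← Finset.sum_add_distrib]
    exact Finset.sum_congr rfl fun i _ => by ring
  rw [hsplit, ← hPeq]
  ring

lemma Xfun_pos (n : ℕ) (a : ℝ) (ha0 : 0 < a) (x N : Fin n → ℝ) (hx : ∀ i, 0 ≤ x i)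
    (hhx : hfun n a x = 1) (hN : ∀ i, 1 ≤ N i) : 0 < Xfun n a x N := by
  have h1x : ∀ i, (0:ℝ) < 1 + x i := fun i => by linarith [hx i]
  have hPmpos : ∀ i, (0:ℝ) < ∏ j ∈ Finset.univ.erase i, (1 + x j) := fun i =>
    Finset.prod_pos fun j _ => h1x j
  rw [Xfun_eq n a x N hx hhx]
  obtain ⟨i0, j0, hij, hxi, hxj⟩ := hfun_two_pos n a ha0 x hx hhx
  have hnonneg : ∀ i ∈ Finset.univ,
      (0:ℝ) ≤ x i * (N i - 1 + ∏ j ∈ Finset.univ.erase i, (1 + x j)) := by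
    intro i _
    apply mul_nonneg (hx i)
    have := hN i
    linarith [hPmpos i]
  calc (0:ℝ) < x i0 * (N i0 - 1 + ∏ j ∈ Finset.univ.erase i0, (1 + x j)) := by
        apply mul_pos hxi
        have := hN i0
        linarith [hPmpos i0]
    _ ≤ _ := Finset.single_le_sum hnonneg (Finset.mem_univ i0)

-- translation of the hfun constraint to u-coordinates
lemma hfun_translate (n : ℕ) (a : ℝ) (x : Fin n → ℝ) (hx : ∀ i, 0 ≤ x i)
    (hhx : hfun n a x = 1) :
    ∑ i, (1 + x i)⁻¹ = (n : ℝ) - 1 + (1 - a) * ∏ i, (1 + x i)⁻¹ ∧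
    ∑ i, x i * (1 + x i)⁻¹ = 1 - (1 - a) * ∏ i, (1 + x i)⁻¹ := by
  have h1x : ∀ i, (0:ℝ) < 1 + x i := fun i => by linarith [hx i]
  have hsx : ∑ i, x i * (1 + x i)⁻¹ = 1 - (1 - a) * ∏ i, (1 + x i)⁻¹ := by
    have h0 := hhx
    unfold hfun at h0
    have e1 : ∀ i : Fin n, x i / (1 + x i) = x i * (1 + x i)⁻¹ := fun i => div_eq_mul_inv _ _
    have e2 : (1 - a) / ∏ j, (1 + x j) = (1 - a) * ∏ i, (1 + x i)⁻¹ := by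
      rw [div_eq_mul_inv, ← Finset.prod_inv_distrib]
    rw [Finset.sum_congr rfl (fun i _ => e1 i), e2] at h0
    linarith
  refine ⟨?_, hsx⟩
  have e3 : ∀ i : Fin n, (1 + x i)⁻¹ = 1 - x i * (1 + x i)⁻¹ := by
    intro i
    field_simp
    rw [eq_sub_iff_add_eq, ← add_div, div_self (ne_of_gt (h1x i))]
  rw [Finset.sum_congr rfl (fun i _ => e3 i), Finset.sum_sub_distrib, hsx]
  simp [Finset.card_univ]
  ring

lemma ki_x (n : ℕ) (a : ℝ) (ha0 : 0 < a) (ha1 : a < 1) (x z : Fin n → ℝ)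
    (hx : ∀ i, 0 ≤ x i) (hz : ∀ i, 0 ≤ z i)
    (hhx : hfun n a x = 1) (hhz : hfun n a z = 1) :
    ∑ i, x i * ∏ j ∈ Finset.univ.erase i, (1 + x j) ≤
      ∑ i, x i * ∏ j ∈ Finset.univ.erase i, (1 + z j) := by
  have h1x : ∀ i, (0:ℝ) < 1 + x i := fun i => by linarith [hx i]
  have h1z : ∀ i, (0:ℝ) < 1 + z i := fun i => by linarith [hz i]
  set K : ℝ := 1 - a with hKdef
  set v : Fin n → ℝ := fun i => (1 + x i)⁻¹ with hvdef
  set u : Fin n → ℝ := fun i => (1 + z i)⁻¹ with hudef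
  have hv0 : ∀ i, 0 < v i := fun i => inv_pos.2 (h1x i)
  have hu0 : ∀ i, 0 < u i := fun i => inv_pos.2 (h1z i)
  have hv1 : ∀ i, v i ≤ 1 := by
    intro i
    rw [hvdef]
    exact inv_le_one_of_one_le₀ (by linarith [hx i])
  have hu1 : ∀ i, u i ≤ 1 := by
    intro i
    rw [hudef]
    exact inv_le_one_of_one_le₀ (by linarith [hz i])
  obtain ⟨hfv, hsxv⟩ := hfun_translate n a x hx hhx
  obtain ⟨hfu, hszu⟩ := hfun_translate n a z hz hhz
  have hU : (0:ℝ) < ∏ i, u i := Finset.prod_pos fun i _ => hu0 i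
  have hV : (0:ℝ) < ∏ i, v i := Finset.prod_pos fun i _ => hv0 i
  have hKI := ki_u n K (by linarith) (by linarith) u v hu0 hu1 hv0 hv1 hfu hfv
  -- rewrite both sides of the goal
  have hPmx : ∀ i, ∏ j ∈ Finset.univ.erase i, (1 + x j) = (∏ i, v i)⁻¹ * v i := by
    intro i
    have h := Finset.mul_prod_erase Finset.univ (fun j => 1 + x j) (Finset.mem_univ i)
    have hVP : (∏ i, v i)⁻¹ = ∏ j, (1 + x j) := by
      rw [hvdef]
      rw [Finset.prod_inv_distrib]
      simp
    rw [hVP, ← h, hvdef]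
    field_simp
    rw [mul_div_cancel_right₀ _ (ne_of_gt (h1x i))]
  have hPmz : ∀ i, ∏ j ∈ Finset.univ.erase i, (1 + z j) = (∏ i, u i)⁻¹ * u i := by
    intro i
    have h := Finset.mul_prod_erase Finset.univ (fun j => 1 + z j) (Finset.mem_univ i)
    have hUP : (∏ i, u i)⁻¹ = ∏ j, (1 + z j) := by
      rw [hudef]
      rw [Finset.prod_inv_distrib]
      simp
    rw [hUP, ← h, hudef]
    field_simp
    rw [mul_div_cancel_right₀ _ (ne_of_gt (h1z i))]
  have hL : ∑ i, x i * ∏ j ∈ Finset.univ.erase i, (1 + x j) =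
      (∏ i, v i)⁻¹ * (1 - K * ∏ i, v i) := by
    rw [Finset.sum_congr rfl (fun i _ => by rw [hPmx i])]
    have : ∀ i : Fin n, x i * ((∏ i, v i)⁻¹ * v i) = (∏ i, v i)⁻¹ * (x i * v i) :=
      fun i => by ring
    rw [Finset.sum_congr rfl (fun i _ => this i), ← Finset.mul_sum, hsxv]
  have hR : ∑ i, x i * ∏ j ∈ Finset.univ.erase i, (1 + z j) =
      (∏ i, u i)⁻¹ * ∑ i, x i * u i := by
    rw [Finset.sum_congr rfl (fun i _ => by rw [hPmz i])]
    have : ∀ i : Fin n, x i * ((∏ i, u i)⁻¹ * u i) = (∏ i, u i)⁻¹ * (x i * u i) :=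
      fun i => by ring
    rw [Finset.sum_congr rfl (fun i _ => this i), ← Finset.mul_sum]
  rw [hL, hR]
  -- key estimate : ∑ x i * u i ≥ (∏u) * (∏v)⁻¹ * (1 - K ∏ v)
  have hxu : ∀ i, x i * u i = u i / v i - u i := by
    intro i
    rw [hvdef, hudef]
    field_simp
    congr 1
    ring
  have hsum_xu : ∑ i, x i * u i = (∑ i, u i / v i) - ((n:ℝ) - 1 + K * ∏ i, u i) := by
    rw [Finset.sum_congr rfl (fun i _ => hxu i), Finset.sum_sub_distrib, hfu]
  have hkey : (∏ i, u i) * ((∏ i, v i)⁻¹ * (1 - K * ∏ i, v i)) ≤ ∑ i, x i * u i := by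
    rw [hsum_xu]
    have hexp : (∏ i, u i) * ((∏ i, v i)⁻¹ * (1 - K * ∏ i, v i)) =
        (∏ i, u i) / (∏ i, v i) - K * ∏ i, u i := by
      field_simp
    rw [hexp]
    linarith [hKI]
  calc (∏ i, v i)⁻¹ * (1 - K * ∏ i, v i)
      = (∏ i, u i)⁻¹ * ((∏ i, u i) * ((∏ i, v i)⁻¹ * (1 - K * ∏ i, v i))) := by
        field_simp
    _ ≤ (∏ i, u i)⁻¹ * ∑ i, x i * u i := by
        apply mul_le_mul_of_nonneg_left hkey (le_of_lt (inv_pos.2 hU))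

set_option maxHeartbeats 1000000 in
theorem stmt3 (n : ℕ) (hn : 2 ≤ n) (a : ℝ) (ha0 : 0 < a) (ha1 : a < 1)
    (L Nlo Nhi : Fin n → ℝ) (hL : ∀ i, 0 < L i)
    (hNlo : ∀ i, 1 ≤ Nlo i) (hNhi : ∀ i, Nlo i ≤ Nhi i) :
    Convex ℝ {u : Fin n → ℝ | ∃ lam : ℝ, ∃ x : Fin n → ℝ, 1 < lam ∧
      (∀ i, 0 ≤ x i) ∧ hfun n a x = 1 ∧ u = lam • sVec n a L x Nhi} := by
  intro w1 hw1 w2 hw2 p q hp hq hpq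
  rcases eq_or_lt_of_le hp with hp0 | hp0
  · have hq1 : q = 1 := by linarith
    rw [← hp0, hq1, zero_smul, one_smul, zero_add]
    exact hw2
  rcases eq_or_lt_of_le hq with hq0 | hq0
  · have hp1 : p = 1 := by linarith
    rw [← hq0, hp1, zero_smul, one_smul, add_zero]
    exact hw1
  obtain ⟨l1, x1, hl1, hx1, hh1, he1⟩ := hw1
  obtain ⟨l2, x2, hl2, hx2, hh2, he2⟩ := hw2
  have hN : ∀ i, 1 ≤ Nhi i := fun i => le_trans (hNlo i) (hNhi i)
  have hNL : ∀ i, 0 < Nhi i * L i := fun i =>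
    mul_pos (lt_of_lt_of_le one_pos (hN i)) (hL i)
  have hNne : ∀ i, Nhi i ≠ 0 := fun i => ne_of_gt (lt_of_lt_of_le one_pos (hN i))
  have hLne : ∀ i, L i ≠ 0 := fun i => ne_of_gt (hL i)
  have hX1 : 0 < Xfun n a x1 Nhi := Xfun_pos n a ha0 x1 Nhi hx1 hh1 hN
  have hX2 : 0 < Xfun n a x2 Nhi := Xfun_pos n a ha0 x2 Nhi hx2 hh2 hN
  have hw1i : ∀ i, w1 i = l1 * (Nhi i * L i * x1 i / Xfun n a x1 Nhi) := by
    intro i; rw [he1]; simp [sVec]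
  have hw2i : ∀ i, w2 i = l2 * (Nhi i * L i * x2 i / Xfun n a x2 Nhi) := by
    intro i; rw [he2]; simp [sVec]
  have hw1nn : ∀ i, 0 ≤ w1 i := by
    intro i
    rw [hw1i i]
    exact mul_nonneg (by linarith)
      (div_nonneg (mul_nonneg (le_of_lt (hNL i)) (hx1 i)) (le_of_lt hX1))
  have hw2nn : ∀ i, 0 ≤ w2 i := by
    intro i
    rw [hw2i i]
    exact mul_nonneg (by linarith)
      (div_nonneg (mul_nonneg (le_of_lt (hNL i)) (hx2 i)) (le_of_lt hX2))
  set w : Fin n → ℝ := fun i => p * w1 i + q * w2 i with hwdef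
  have hwnn : ∀ i, 0 ≤ w i :=
    fun i => add_nonneg (mul_nonneg (le_of_lt hp0) (hw1nn i))
      (mul_nonneg (le_of_lt hq0) (hw2nn i))
  set d : Fin n → ℝ := fun i => w i / (Nhi i * L i) with hddef
  have hdnn : ∀ i, 0 ≤ d i := fun i => div_nonneg (hwnn i) (le_of_lt (hNL i))
  -- two strictly positive coordinates
  obtain ⟨i0, j0, hij, hxi0, hxj0⟩ := hfun_two_pos n a ha0 x1 hx1 hh1
  have hwpos : ∀ k, 0 < x1 k → 0 < w k := by
    intro k hk
    have h1 : 0 < w1 k := by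
      rw [hw1i k]
      exact mul_pos (by linarith) (div_pos (mul_pos (hNL k) hk) hX1)
    have := mul_pos hp0 h1
    have h2 := mul_nonneg (le_of_lt hq0) (hw2nn k)
    simp only [hwdef]
    linarith
  have hdi0 : 0 < d i0 := div_pos (hwpos i0 hxi0) (hNL i0)
  have hdj0 : 0 < d j0 := div_pos (hwpos j0 hxj0) (hNL j0)
  -- intermediate value theorem setup
  set C : ℝ := max (d i0)⁻¹ (d j0)⁻¹ with hCdef
  have hC0 : (0:ℝ) ≤ C := le_trans (le_of_lt (inv_pos.2 hdi0)) (le_max_left _ _)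
  set H : ℝ → ℝ := fun c =>
    (∑ i, (c * d i) / (1 + c * d i)) + (1 - a) / ∏ j, (1 + c * d j) with hHdef
  have hHfun : ∀ c, H c = hfun n a (fun i => c * d i) := fun c => rfl
  have hden : ∀ i, ∀ c ∈ Set.Icc (0:ℝ) C, (0:ℝ) < 1 + c * d i := by
    intro i c hc
    have := mul_nonneg hc.1 (hdnn i)
    linarith
  have hHcont : ContinuousOn H (Set.Icc 0 C) := by
    apply ContinuousOn.add
    · apply continuousOn_finset_sum
      intro i _
      apply ContinuousOn.div
      · exact (continuous_id.mul continuous_const).continuousOn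
      · exact (continuous_const.add (continuous_id.mul continuous_const)).continuousOn
      · intro c hc; exact ne_of_gt (hden i c hc)
    · apply ContinuousOn.div continuousOn_const
      · apply continuousOn_finset_prod
        intro i _
        exact (continuous_const.add (continuous_id.mul continuous_const)).continuousOn
      · intro c hc
        exact ne_of_gt (Finset.prod_pos fun i _ => hden i c hc)
  have hH0 : H 0 = 1 - a := by
    simp [hHdef]
  have hHC : 1 ≤ H C := by
    have hpos : ∀ i, (0:ℝ) < 1 + C * d i := fun i =>
      hden i C ⟨hC0, le_refl C⟩
    have hterm : ∀ k, 1 ≤ C * d k → (1:ℝ)/2 ≤ (C * d k) / (1 + C * d k) := by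
      intro k hk
      rw [div_le_div_iff₀ (by norm_num) (hpos k)]
      linarith
    have hCi0 : 1 ≤ C * d i0 := by
      have h := mul_le_mul_of_nonneg_right (le_max_left (d i0)⁻¹ (d j0)⁻¹) (le_of_lt hdi0)
      rwa [inv_mul_cancel₀ (ne_of_gt hdi0)] at h
    have hCj0 : 1 ≤ C * d j0 := by
      have h := mul_le_mul_of_nonneg_right (le_max_right (d i0)⁻¹ (d j0)⁻¹) (le_of_lt hdj0)
      rwa [inv_mul_cancel₀ (ne_of_gt hdj0)] at h
    have hnn : ∀ k ∈ Finset.univ, (0:ℝ) ≤ (C * d k) / (1 + C * d k) := by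
      intro k _
      exact div_nonneg (mul_nonneg hC0 (hdnn k)) (le_of_lt (hpos k))
    have hpair : (1:ℝ) ≤ ∑ k ∈ ({i0, j0} : Finset (Fin n)), (C * d k) / (1 + C * d k) := by
      rw [Finset.sum_pair hij]
      have := hterm i0 hCi0
      have := hterm j0 hCj0
      linarith
    have hsum : ∑ k ∈ ({i0, j0} : Finset (Fin n)), (C * d k) / (1 + C * d k) ≤
        ∑ k, (C * d k) / (1 + C * d k) :=
      Finset.sum_le_sum_of_subset_of_nonneg (Finset.subset_univ _) (fun k hk _ => hnn k hk)
    have hlast : (0:ℝ) ≤ (1 - a) / ∏ j, (1 + C * d j) :=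
      div_nonneg (by linarith) (le_of_lt (Finset.prod_pos fun j _ => hpos j))
    simp only [hHdef]
    linarith
  have h1mem : (1:ℝ) ∈ Set.Icc (H 0) (H C) := ⟨by rw [hH0]; linarith, hHC⟩
  obtain ⟨c, hcIcc, hHc⟩ := intermediate_value_Icc hC0 hHcont h1mem
  have hcpos : 0 < c := by
    rcases eq_or_lt_of_le hcIcc.1 with h | h
    · exfalso
      rw [← h] at hHc
      rw [hH0] at hHc
      linarith
    · exact h
  set z : Fin n → ℝ := fun i => c * d i with hzdef
  have hz0 : ∀ i, 0 ≤ z i := fun i => mul_nonneg (le_of_lt hcpos) (hdnn i)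
  have hhz : hfun n a z = 1 := by rw [← hHfun c]; exact hHc
  have hXz : 0 < Xfun n a z Nhi := Xfun_pos n a ha0 z Nhi hz0 hhz hN
  set ν : ℝ := Xfun n a z Nhi / c with hνdef
  -- the mixture equals ν • sVec of z
  have hrep : p • w1 + q • w2 = ν • sVec n a L z Nhi := by
    funext i
    have hzi : z i = c * (w i / (Nhi i * L i)) := rfl
    simp only [Pi.add_apply, Pi.smul_apply, smul_eq_mul, sVec, hνdef, hzi]
    rw [show p * w1 i + q * w2 i = w i from rfl]
    field_simp [hNne i, hLne i, ne_of_gt hXz, ne_of_gt hcpos]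
  -- ν > 1
  have hB1 : Xfun n a x1 Nhi ≤ ∑ i, x1 i * (Nhi i - 1 + ∏ j ∈ Finset.univ.erase i, (1 + z j)) := by
    have hsplit : ∀ y : Fin n → ℝ,
        ∑ i, x1 i * (Nhi i - 1 + ∏ j ∈ Finset.univ.erase i, (1 + y j)) =
        (∑ i, x1 i * (Nhi i - 1)) + ∑ i, x1 i * ∏ j ∈ Finset.univ.erase i, (1 + y j) := by
      intro y
      rw [← Finset.sum_add_distrib]
      exact Finset.sum_congr rfl fun i _ => by ring
    rw [Xfun_eq n a x1 Nhi hx1 hh1, hsplit x1, hsplit z]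
    have := ki_x n a ha0 ha1 x1 z hx1 hz0 hh1 hhz
    linarith
  have hB2 : Xfun n a x2 Nhi ≤ ∑ i, x2 i * (Nhi i - 1 + ∏ j ∈ Finset.univ.erase i, (1 + z j)) := by
    have hsplit : ∀ y : Fin n → ℝ,
        ∑ i, x2 i * (Nhi i - 1 + ∏ j ∈ Finset.univ.erase i, (1 + y j)) =
        (∑ i, x2 i * (Nhi i - 1)) + ∑ i, x2 i * ∏ j ∈ Finset.univ.erase i, (1 + y j) := by
      intro y
      rw [← Finset.sum_add_distrib]
      exact Finset.sum_congr rfl fun i _ => by ring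
    rw [Xfun_eq n a x2 Nhi hx2 hh2, hsplit x2, hsplit z]
    have := ki_x n a ha0 ha1 x2 z hx2 hz0 hh2 hhz
    linarith
  have hν1 : 1 < ν := by
    have hνsum : ν = ∑ i, d i * (Nhi i - 1 + ∏ j ∈ Finset.univ.erase i, (1 + z j)) := by
      rw [hνdef, Xfun_eq n a z Nhi hz0 hhz]
      have he : ∑ i, z i * (Nhi i - 1 + ∏ j ∈ Finset.univ.erase i, (1 + z j)) =
          c * ∑ i, d i * (Nhi i - 1 + ∏ j ∈ Finset.univ.erase i, (1 + z j)) := by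
        rw [Finset.mul_sum]
        exact Finset.sum_congr rfl fun i _ => by
          rw [show z i = c * d i from rfl]; ring
      rw [he, mul_comm, mul_div_assoc, div_self (ne_of_gt hcpos), mul_one]
    have hdsplit : ∀ i, d i * (Nhi i - 1 + ∏ j ∈ Finset.univ.erase i, (1 + z j)) =
        p * l1 * ((x1 i * (Nhi i - 1 + ∏ j ∈ Finset.univ.erase i, (1 + z j))) / Xfun n a x1 Nhi)
        + q * l2 * ((x2 i * (Nhi i - 1 + ∏ j ∈ Finset.univ.erase i, (1 + z j))) / Xfun n a x2 Nhi) := by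
      intro i
      have hdi : d i = w i / (Nhi i * L i) := rfl
      have hwi : w i = p * w1 i + q * w2 i := rfl
      rw [hdi, hwi, hw1i i, hw2i i]
      field_simp [hNne i, hLne i, ne_of_gt hX1, ne_of_gt hX2]
    have hνsplit : ν = p * l1 * ((∑ i, x1 i * (Nhi i - 1 + ∏ j ∈ Finset.univ.erase i, (1 + z j))) / Xfun n a x1 Nhi)
        + q * l2 * ((∑ i, x2 i * (Nhi i - 1 + ∏ j ∈ Finset.univ.erase i, (1 + z j))) / Xfun n a x2 Nhi) := by
      rw [hνsum, Finset.sum_congr rfl (fun i _ => hdsplit i), Finset.sum_add_distrib]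
      congr 1
      · rw [Finset.sum_div, Finset.mul_sum]
      · rw [Finset.sum_div, Finset.mul_sum]
    have hA1 : 1 ≤ (∑ i, x1 i * (Nhi i - 1 + ∏ j ∈ Finset.univ.erase i, (1 + z j))) / Xfun n a x1 Nhi :=
      (one_le_div hX1).2 hB1
    have hA2 : 1 ≤ (∑ i, x2 i * (Nhi i - 1 + ∏ j ∈ Finset.univ.erase i, (1 + z j))) / Xfun n a x2 Nhi :=
      (one_le_div hX2).2 hB2
    have hpl1 : 0 < p * l1 := mul_pos hp0 (by linarith)
    have hql2 : 0 < q * l2 := mul_pos hq0 (by linarith)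
    have h1 : p * l1 ≤ p * l1 * ((∑ i, x1 i * (Nhi i - 1 + ∏ j ∈ Finset.univ.erase i, (1 + z j))) / Xfun n a x1 Nhi) := by
      nlinarith
    have h2 : q * l2 ≤ q * l2 * ((∑ i, x2 i * (Nhi i - 1 + ∏ j ∈ Finset.univ.erase i, (1 + z j))) / Xfun n a x2 Nhi) := by
      nlinarith
    have h3 : p < p * l1 := by nlinarith
    have h4 : q < q * l2 := by nlinarith
    rw [hνsplit]
    linarith
  exact ⟨ν, z, hν1, hz0, hhz, hrep⟩
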